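/- Conditional lower probability is not algebraic: there exist a finite set W, a finite set P of probability measures on W, and pairwise disjoint events U1, V1, U2, V2 such that P_*(U1) = P_*(V1), P_*(U2) = P_*(V2), but P_*(U1 ∪ U2) ≠ P_*(V1 ∪ V2); hence no binary operation ⊕ can satisfy P_*(A ∪ B) = P_*(A) ⊕ P_*(B) for all disjoint A, B. -/

import Mathlib

/-- The lower probability of the finite set of measures μ₀, …, μ_k on Fin n. -/
noncomputable def lowProb {n k : ℕ} (μ : Fin (k + 1) → Fin n → ℝ)
    (A : Finset (Fin n)) : ℝ :=
  Finset.univ.inf' Finset.univ_nonempty (fun j => ∑ w ∈ A, μ j w)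

lemma inf'_fin_two (f : Fin 2 → ℝ) :
    Finset.univ.inf' Finset.univ_nonempty f = min (f 0) (f 1) := by
  apply le_antisymm
  · exact le_min (Finset.inf'_le _ (by simp)) (Finset.inf'_le _ (by simp))
  · apply Finset.le_inf'
    intro j _
    fin_cases j
    · exact min_le_left _ _
    · exact min_le_right _ _

lemma lowProb_two {n : ℕ} (μ : Fin 2 → Fin n → ℝ) (A : Finset (Fin n)) :
    lowProb μ A = min (∑ w ∈ A, μ 0 w) (∑ w ∈ A, μ 1 w) := by
  exact inf'_fin_two _

/-- conditional lower probability is not algebraic: there are a finite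
set W, a finite set P of probability measures on W, and pairwise disjoint events
U₁, V₁, U₂, V₂ with P_*(U₁) = P_*(V₁), P_*(U₂) = P_*(V₂) but
P_*(U₁ ∪ U₂) ≠ P_*(V₁ ∪ V₂); hence no binary operation ⊕ satisfies
P_*(A ∪ B) = P_*(A) ⊕ P_*(B) for all disjoint A, B. -/
theorem lower_probability_not_algebraic :
    ∃ (n k : ℕ) (μ : Fin (k + 1) → Fin n → ℝ) (U₁ V₁ U₂ V₂ : Finset (Fin n)),
      (∀ j, (∀ w, 0 ≤ μ j w) ∧ ∑ w, μ j w = 1) ∧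
      Disjoint U₁ V₁ ∧ Disjoint U₁ U₂ ∧ Disjoint U₁ V₂ ∧
      Disjoint V₁ U₂ ∧ Disjoint V₁ V₂ ∧ Disjoint U₂ V₂ ∧
      lowProb μ U₁ = lowProb μ V₁ ∧ lowProb μ U₂ = lowProb μ V₂ ∧
      lowProb μ (U₁ ∪ U₂) ≠ lowProb μ (V₁ ∪ V₂) ∧
      ¬ ∃ op : ℝ → ℝ → ℝ, ∀ A B : Finset (Fin n), Disjoint A B →
          lowProb μ (A ∪ B) = op (lowProb μ A) (lowProb μ B) := by
  refine ⟨5, 1, ![![0.1, 0.4, 0.2, 0.2, 0.1], ![0.4, 0.1, 0.2, 0.3, 0]],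
    {0}, {1}, {2}, {3}, ?_, by decide, by decide, by decide, by decide, by decide,
    by decide, ?_, ?_, ?_, ?_⟩
  · intro j
    fin_cases j <;>
      refine ⟨fun w => ?_, by norm_num [Fin.sum_univ_five, Matrix.cons_val_two, Matrix.cons_val_three, Matrix.cons_val_four]⟩ <;>
      fin_cases w <;> norm_num
  · rw [lowProb_two, lowProb_two]; norm_num
  · rw [lowProb_two, lowProb_two]; norm_num [Matrix.cons_val_two, Matrix.cons_val_three, Matrix.cons_val_four]
  · rw [lowProb_two, lowProb_two]
    norm_num [Matrix.cons_val_two, Matrix.cons_val_three, Matrix.cons_val_four, Finset.sum_pair (by decide : (0 : Fin 5) ≠ 2),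
      Finset.sum_pair (by decide : (1 : Fin 5) ≠ 3), Finset.sum_union (by decide : Disjoint ({0} : Finset (Fin 5)) {2}),
      Finset.sum_union (by decide : Disjoint ({1} : Finset (Fin 5)) {3})]
  · rintro ⟨op, hop⟩
    have h1 := hop {0} {2} (by decide)
    have h2 := hop {1} {3} (by decide)
    rw [lowProb_two, lowProb_two, lowProb_two] at h1 h2
    simp only [Finset.sum_union (by decide : Disjoint ({0} : Finset (Fin 5)) {2})] at h1
    simp only [Finset.sum_union (by decide : Disjoint ({1} : Finset (Fin 5)) {3})] at h2
    norm_num [Matrix.cons_val_two, Matrix.cons_val_three, Matrix.cons_val_four] at h1 h2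
    linarith
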